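/- Let X, Y be bounded operators on a complex Hilbert space H. Then max{w(X+Y)², w(X−Y)²} ≤ w(X)² + w(Y)² + (1/2)·‖X*X + Y*Y‖ + w(Y*X)². -/

import Mathlib

open scoped InnerProductSpace
open ContinuousLinearMap
noncomputable section
set_option synthInstance.maxHeartbeats 1000000
set_option maxHeartbeats 1000000

variable {H : Type*} [NormedAddCommGroup H] [InnerProductSpace ℂ H] [CompleteSpace H]

/-- The numerical radius of a bounded operator. -/
noncomputable def numRadius (T : H →L[ℂ] H) : ℝ :=
  sSup {r : ℝ | ∃ x : H, ‖x‖ = 1 ∧ r = ‖(⟪T x, x⟫_ℂ)‖}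

/-- The 2×2 block operator [[X, Y],[Z, W]] on H ⊕ H (ℓ² direct sum). -/
noncomputable def blockOp (X Y Z W : H →L[ℂ] H) :
    WithLp 2 (H × H) →L[ℂ] WithLp 2 (H × H) :=
  ((WithLp.prodContinuousLinearEquiv 2 ℂ H H).symm.toContinuousLinearMap) ∘L
    ((X ∘L ContinuousLinearMap.fst ℂ H H + Y ∘L ContinuousLinearMap.snd ℂ H H).prod
      (Z ∘L ContinuousLinearMap.fst ℂ H H + W ∘L ContinuousLinearMap.snd ℂ H H)) ∘L
    ((WithLp.prodContinuousLinearEquiv 2 ℂ H H).toContinuousLinearMap)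


set_option linter.unusedSectionVars false

lemma buzano (a b x : H) (hx : ‖x‖ = 1) :
    2 * ‖⟪a, x⟫_ℂ * ⟪x, b⟫_ℂ‖ ≤ ‖a‖ * ‖b‖ + ‖⟪a, b⟫_ℂ‖ := by
  set u : H := ⟪x, a⟫_ℂ • x with hu
  have hxx : ⟪x, x⟫_ℂ = 1 := by
    rw [inner_self_eq_norm_sq_to_K, hx]; norm_num
  have horth : ⟪u, a - u⟫_ℂ = 0 := by
    simp [hu, inner_smul_left, inner_sub_right, inner_smul_right, hxx]
    rw [norm_smul, hx, mul_one, ← inner_conj_symm a x, RCLike.mul_conj]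
    simp
  have h1 : ⟪a, x⟫_ℂ * ⟪x, b⟫_ℂ = ⟪u, b⟫_ℂ := by
    rw [hu, inner_smul_left, inner_conj_symm]
  have hnorm : ‖u - (a - u)‖ = ‖a‖ := by
    have e0 : u + (a - u) = a := by abel
    have e1 : ‖u + (a - u)‖ ^ 2 = ‖u‖^2 + ‖a - u‖^2 := by
      rw [@norm_add_sq ℂ]; simp [horth]
    have e2 : ‖u - (a - u)‖ ^ 2 = ‖u‖^2 + ‖a - u‖^2 := by
      rw [@norm_sub_sq ℂ]; simp [horth]
    rw [e0] at e1
    have h3 : ‖u - (a - u)‖ ^ 2 = ‖a‖ ^ 2 := by rw [e2, ← e1]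
    nlinarith [norm_nonneg (u - (a - u)), norm_nonneg a]
  have h2 : (2 : ℂ) * ⟪u, b⟫_ℂ = ⟪u - (a - u), b⟫_ℂ + ⟪a, b⟫_ℂ := by
    rw [inner_sub_left, inner_sub_left]
    ring
  calc 2 * ‖⟪a, x⟫_ℂ * ⟪x, b⟫_ℂ‖ = ‖(2:ℂ) * ⟪u, b⟫_ℂ‖ := by
        rw [h1, norm_mul]; simp
    _ ≤ ‖⟪u - (a - u), b⟫_ℂ‖ + ‖⟪a, b⟫_ℂ‖ := by rw [h2]; exact norm_add_le _ _
    _ ≤ ‖u - (a - u)‖ * ‖b‖ + ‖⟪a, b⟫_ℂ‖ := by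
        gcongr; exact norm_inner_le_norm _ _
    _ = ‖a‖ * ‖b‖ + ‖⟪a, b⟫_ℂ‖ := by rw [hnorm]

lemma numRadius_bddAbove (T : H →L[ℂ] H) :
    BddAbove {r : ℝ | ∃ x : H, ‖x‖ = 1 ∧ r = ‖(⟪T x, x⟫_ℂ)‖} := by
  refine ⟨‖T‖, fun r hr => ?_⟩
  obtain ⟨x, hx, rfl⟩ := hr
  calc ‖⟪T x, x⟫_ℂ‖ ≤ ‖T x‖ * ‖x‖ := norm_inner_le_norm _ _
    _ ≤ ‖T‖ * ‖x‖ * ‖x‖ := by gcongr; exact T.le_opNorm x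
    _ = ‖T‖ := by rw [hx]; ring

lemma le_numRadius (T : H →L[ℂ] H) {x : H} (hx : ‖x‖ = 1) :
    ‖⟪T x, x⟫_ℂ‖ ≤ numRadius T :=
  le_csSup (numRadius_bddAbove T) ⟨x, hx, rfl⟩

lemma numRadius_nonneg (T : H →L[ℂ] H) : 0 ≤ numRadius T := by
  by_cases h : ∃ x : H, ‖x‖ = 1
  · obtain ⟨x, hx⟩ := h
    exact le_trans (norm_nonneg _) (le_numRadius T hx)
  · have : {r : ℝ | ∃ x : H, ‖x‖ = 1 ∧ r = ‖(⟪T x, x⟫_ℂ)‖} = ∅ := by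
      ext r; simp only [Set.mem_setOf_eq, Set.mem_empty_iff_false, iff_false]
      rintro ⟨x, hx, -⟩; exact h ⟨x, hx⟩
    rw [numRadius, this, Real.sSup_empty]

lemma key_ptwise (X Y : H →L[ℂ] H) {x : H} (hx : ‖x‖ = 1) :
    (‖⟪X x, x⟫_ℂ‖ + ‖⟪Y x, x⟫_ℂ‖) ^ 2 ≤
      numRadius X ^ 2 + numRadius Y ^ 2 +
        (1 / 2) * ‖adjoint X * X + adjoint Y * Y‖ + numRadius (adjoint Y * X) := by
  have ha := le_numRadius X hx
  have hb := le_numRadius Y hx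
  have hbuz := buzano (X x) (Y x) x hx
  have hw : ‖⟪X x, Y x⟫_ℂ‖ ≤ numRadius (adjoint Y * X) := by
    have e : ⟪(adjoint Y * X) x, x⟫_ℂ = ⟪X x, Y x⟫_ℂ := by
      rw [ContinuousLinearMap.mul_apply, adjoint_inner_left]
    rw [← e]; exact le_numRadius _ hx
  have hS : ‖X x‖ ^ 2 + ‖Y x‖ ^ 2 ≤ ‖adjoint X * X + adjoint Y * Y‖ := by
    have e : ⟪(adjoint X * X + adjoint Y * Y) x, x⟫_ℂ = ⟪X x, X x⟫_ℂ + ⟪Y x, Y x⟫_ℂ := by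
      rw [add_apply, inner_add_left, ContinuousLinearMap.mul_apply, ContinuousLinearMap.mul_apply, adjoint_inner_left,
        adjoint_inner_left]
    have e2 : (⟪(adjoint X * X + adjoint Y * Y) x, x⟫_ℂ).re = ‖X x‖ ^ 2 + ‖Y x‖ ^ 2 := by
      rw [e, inner_self_eq_norm_sq_to_K, inner_self_eq_norm_sq_to_K]
      simp [← Complex.ofReal_pow]
    calc ‖X x‖ ^ 2 + ‖Y x‖ ^ 2 = (⟪(adjoint X * X + adjoint Y * Y) x, x⟫_ℂ).re := e2.symm
      _ ≤ ‖⟪(adjoint X * X + adjoint Y * Y) x, x⟫_ℂ‖ := by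
          exact Complex.re_le_norm _
      _ ≤ ‖(adjoint X * X + adjoint Y * Y) x‖ * ‖x‖ := norm_inner_le_norm _ _
      _ ≤ ‖adjoint X * X + adjoint Y * Y‖ * ‖x‖ * ‖x‖ := by
          gcongr; exact le_opNorm _ x
      _ = ‖adjoint X * X + adjoint Y * Y‖ := by rw [hx]; ring
  have hsymm : ‖⟪Y x, x⟫_ℂ‖ = ‖⟪x, Y x⟫_ℂ‖ := by
    rw [← inner_conj_symm, RCLike.norm_conj]
  have hbuz' : 2 * (‖⟪X x, x⟫_ℂ‖ * ‖⟪Y x, x⟫_ℂ‖) ≤ ‖X x‖ * ‖Y x‖ + ‖⟪X x, Y x⟫_ℂ‖ := by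
    rw [hsymm, ← norm_mul]; exact hbuz
  nlinarith [norm_nonneg (⟪X x, x⟫_ℂ), norm_nonneg (⟪Y x, x⟫_ℂ),
    sq_nonneg (‖X x‖ - ‖Y x‖), norm_nonneg (X x), norm_nonneg (Y x)]

theorem numRadius_sum_diff_ineq (X Y : H →L[ℂ] H) :
    max (numRadius (X + Y) ^ 2) (numRadius (X - Y) ^ 2) ≤
      numRadius X ^ 2 + numRadius Y ^ 2 +
        (1 / 2) * ‖adjoint X * X + adjoint Y * Y‖ + numRadius (adjoint Y * X) := by
  set R : ℝ := numRadius X ^ 2 + numRadius Y ^ 2 +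
      (1 / 2) * ‖adjoint X * X + adjoint Y * Y‖ + numRadius (adjoint Y * X) with hR
  have hR0 : 0 ≤ R := by
    have := numRadius_nonneg X
    have := numRadius_nonneg Y
    have := numRadius_nonneg (adjoint Y * X)
    have := norm_nonneg (adjoint X * X + adjoint Y * Y)
    positivity
  have h_each : ∀ Z : H →L[ℂ] H,
      (∀ x : H, ‖x‖ = 1 → ‖⟪Z x, x⟫_ℂ‖ ≤ ‖⟪X x, x⟫_ℂ‖ + ‖⟪Y x, x⟫_ℂ‖) →
      numRadius Z ^ 2 ≤ R := by
    intro Z hZ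
    have h1 : numRadius Z ≤ Real.sqrt R := by
      apply Real.sSup_le
      · rintro r ⟨x, hx, rfl⟩
        have h2 : ‖⟪Z x, x⟫_ℂ‖ ^ 2 ≤ R :=
          le_trans (pow_le_pow_left₀ (norm_nonneg _) (hZ x hx) 2) (key_ptwise X Y hx)
        exact (Real.le_sqrt (norm_nonneg _) hR0).mpr h2
      · exact Real.sqrt_nonneg R
    calc numRadius Z ^ 2 ≤ Real.sqrt R ^ 2 := pow_le_pow_left₀ (numRadius_nonneg Z) h1 2
      _ = R := Real.sq_sqrt hR0
  refine max_le (h_each _ fun x hx => ?_) (h_each _ fun x hx => ?_)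
  · rw [add_apply, inner_add_left]; exact norm_add_le _ _
  · rw [sub_apply, inner_sub_left]; exact norm_sub_le _ _
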